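/- Let L be a Leibniz algebra over F, (l,r,V) a representation of L, A a subspace of L, and x an element of the normalizer n_L(A). Then for every integer k ≥ 0 and every a ∈ A, the endomorphism δ_{k+1} = r_a^{k+1}∘r_x - r_x∘r_a^{k+1} belongs to the subspace (r_A)^{k+1} of End(V). -/

import Mathlib

/-- Let `(l,r,V)` be a representation of a Leibniz algebra `L`,
`A` a subspace of `L` and `x ∈ n_L(A)` (the normalizer of `A`).  Then for every
`k ≥ 0` and every `a ∈ A`, the endomorphism
`δ_{k+1} = r_a^{k+1}∘r_x - r_x∘r_a^{k+1}` lies in `(r_A)^{k+1}`,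
where `r_A = span {r_a : a ∈ A} = A.map r` and powers of subspaces of `End(V)`
are spans of products (compositions). -/
theorem delta_mem_pow
    (F L V : Type*) [Field F]
    [AddCommGroup L] [Module F L]
    [AddCommGroup V] [Module F V]
    (b : L →ₗ[F] L →ₗ[F] L)
    (hb : ∀ x y z : L, b x (b y z) = b (b x y) z - b (b x z) y)
    (l r : L →ₗ[F] Module.End F V)
    (hr : ∀ x y : L, r (b x y) = r y * r x - r x * r y)
    (hlr : ∀ x y : L, l (b x y) = r y * l x - l x * r y)
    (hll : ∀ x y : L, l (b x y) = r y * l x + l x * l y)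
    (A : Submodule F L) (x : L)
    (hx : ∀ a ∈ A, b x a ∈ A ∧ b a x ∈ A) :
    ∀ (k : ℕ), ∀ a ∈ A,
      (r a) ^ (k + 1) * r x - r x * (r a) ^ (k + 1) ∈ (A.map r) ^ (k + 1) := by
  intro k
  induction k with
  | zero =>
    intro a ha
    rw [zero_add, pow_one, pow_one (r a)]
    have h1 : r (b x a) = r a * r x - r x * r a := hr x a
    rw [← h1]
    exact Submodule.mem_map_of_mem (f := r) (hx a ha).1
  | succ n ih =>
    intro a ha
    have hd1 : r a * r x - r x * r a ∈ A.map r := by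
      rw [← hr x a]; exact Submodule.mem_map_of_mem (f := r) (hx a ha).1
    have hra : r a ∈ A.map r := Submodule.mem_map_of_mem ha
    have key : (r a) ^ (n + 1 + 1) * r x - r x * (r a) ^ (n + 1 + 1)
        = r a * ((r a) ^ (n + 1) * r x - r x * (r a) ^ (n + 1))
          + (r a * r x - r x * r a) * (r a) ^ (n + 1) := by
      rw [pow_succ']; noncomm_ring
    rw [key, pow_succ' (A.map r) (n + 1)]
    exact add_mem (Submodule.mul_mem_mul hra (ih a ha))
      (Submodule.mul_mem_mul hd1 (Submodule.pow_mem_pow (A.map r) hra (n+1)))
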